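/- Let K be a field of characteristic 0. Every Laurent series h ∈ K((t)) can be written as a sum of two Wronskians, h = (f₁·g₁′ − f₁′·g₁) + (f₂·g₂′ − f₂′·g₂) with f₁, g₁, f₂, g₂ ∈ K((t)). In particular, the Lie algebra of formal vector fields f(t)·d/dt on K((t)), with bracket [f, g] = f·g′ − f′·g, is perfect. -/

import Mathlib

/-- The formal derivative of a Laurent series: the coefficient of `t^n` in `f'` is
`(n+1)` times the coefficient of `t^(n+1)` in `f`. -/
noncomputable def lder {K : Type*} [Field K] (f : LaurentSeries K) : LaurentSeries K where
  coeff n := (n + 1 : ℤ) • f.coeff (n + 1)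
  isPWO_support' := by
    have hmono : Monotone (fun m : ℤ => m - 1) := fun a b hab => by simpa using hab
    have h : (Function.support fun n : ℤ => (n + 1 : ℤ) • f.coeff (n + 1)) ⊆
        (fun m : ℤ => m - 1) '' (Function.support f.coeff) := by
      intro n hn
      refine ⟨n + 1, fun h0 => ?_, by ring⟩
      simp [Function.mem_support, h0] at hn
    exact (f.isPWO_support'.image_of_monotoneOn (hmono.monotoneOn _)).mono h


lemma lder_coeff {K : Type*} [Field K] (f : LaurentSeries K) (n : ℤ) :
    (lder f).coeff n = (n + 1 : ℤ) • f.coeff (n + 1) := rfl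

/-- Formal antiderivative, with no `t^0` term; note the coefficient at `-1` is dropped. -/
noncomputable def lantider {K : Type*} [Field K] (f : LaurentSeries K) : LaurentSeries K where
  coeff n := if n = 0 then 0 else f.coeff (n - 1) / (n : K)
  isPWO_support' := by
    have hmono : Monotone (fun m : ℤ => m + 1) := fun a b hab => by simpa using hab
    have h : (Function.support fun n : ℤ => if n = 0 then (0:K) else f.coeff (n - 1) / (n : K)) ⊆
        (fun m : ℤ => m + 1) '' (Function.support f.coeff) := by
      intro n hn
      refine ⟨n - 1, fun h0 => ?_, by ring⟩
      simp [Function.mem_support, h0] at hn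
    exact (f.isPWO_support'.image_of_monotoneOn (hmono.monotoneOn _)).mono h

lemma lantider_coeff {K : Type*} [Field K] (f : LaurentSeries K) (n : ℤ) :
    (lantider f).coeff n = if n = 0 then 0 else f.coeff (n - 1) / (n : K) := rfl

lemma lder_one {K : Type*} [Field K] : lder (1 : LaurentSeries K) = 0 := by
  ext n
  rw [lder_coeff]
  rcases eq_or_ne n (-1) with rfl | hn
  · simp
  · have : (n + 1 : ℤ) ≠ 0 := by omega
    simp [HahnSeries.coeff_one, this]

lemma lder_single {K : Type*} [Field K] (a : ℤ) (r : K) :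
    lder (HahnSeries.single a r) = HahnSeries.single (a - 1) ((a : ℤ) • r) := by
  ext n
  rw [lder_coeff]
  rcases eq_or_ne n (a - 1) with rfl | hn
  · simp
  · have h1 : n + 1 ≠ a := by omega
    simp [HahnSeries.coeff_single, h1, hn]

/-- Every formal Laurent series over a field of characteristic zero is the sum of two
Wronskians `f·g' − f'·g`; in particular the Lie algebra of formal vector fields
`f(t)·d/dt`, whose bracket is the Wronskian, is perfect. -/
theorem laurentSeries_eq_sum_of_two_wronskians (K : Type*) [Field K] [CharZero K]
    (h : LaurentSeries K) :
    ∃ f₁ g₁ f₂ g₂ : LaurentSeries K,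
      h = (f₁ * lder g₁ - lder f₁ * g₁) + (f₂ * lder g₂ - lder f₂ * g₂) := by
  set c := h.coeff (-1) with hc
  refine ⟨1, lantider h, HahnSeries.single 1 1, HahnSeries.single (-1) (-(c/2)), ?_⟩
  rw [lder_one, lder_single, lder_single]
  norm_num
  ext n
  simp only [HahnSeries.coeff_add, HahnSeries.coeff_sub, HahnSeries.coeff_single, lantider_coeff,
    lder_coeff]
  rcases eq_or_ne n (-1) with rfl | hn
  · norm_num
    rfl
  · have h1 : n + 1 ≠ 0 := by omega
    have h1' : ((n : K) + 1) ≠ 0 := by exact_mod_cast (by exact_mod_cast h1 : ((n+1 : ℤ) : K) ≠ 0)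
    simp only [if_neg h1, if_neg hn]
    rw [zsmul_eq_mul]
    push_cast
    field_simp
    simp
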